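/- Let K be an algebraically closed field of characteristic 0, let f, g ∈ K[x] be monic with d := deg f ≥ 2 and deg g ≥ 1, and let γ₁, …, γ_{d−1} be the roots of the derivative f′ counted with multiplicity (so f′ = d·∏_{i=1}^{d−1}(x − γ_i)). For a nonconstant P ∈ K[x] define Δ(P) = ∏_{α} P′(α), the product taken over the roots α of P in K counted with multiplicity. Then for every n ≥ 1, Δ(g ∘ f^n) = Δ(g ∘ f^{n−1})^d · ((−1)^{d−1} d)^{dⁿ·deg g} · ∏_{i=1}^{d−1} g(f^n(γ_i)). -/

import Mathlib

open Polynomial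

/-- The `n`-th iterate of a polynomial, with `f^0 = X`. -/
noncomputable def polyIter {R : Type*} [CommRing R] (f : Polynomial R) : ℕ → Polynomial R
  | 0 => X
  | n + 1 => f.comp (polyIter f n)

/-- `Δ(P) = ∏_{α root of P, with multiplicity} P′(α)`, the resultant-type
discriminant `R(P, P′)` of a monic polynomial over an algebraically closed field. -/
noncomputable def discProd {K : Type*} [Field K] (P : Polynomial K) : K :=
  (P.roots.map (fun α => Polynomial.eval α (derivative P))).prod

section Aux

variable {K : Type*} [Field K]

lemma polyIter_natDegree (f : Polynomial K) (n : ℕ) :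
    (polyIter f n).natDegree = f.natDegree ^ n := by
  induction n with
  | zero => simp [polyIter]
  | succ n ih => rw [polyIter, natDegree_comp, ih, pow_succ]; ring

lemma polyIter_monic (f : Polynomial K) (hf : f.Monic) (hfd : f.natDegree ≠ 0) (n : ℕ) :
    (polyIter f n).Monic := by
  induction n with
  | zero => exact monic_X
  | succ n ih =>
    exact hf.comp ih (by rw [polyIter_natDegree]; exact pow_ne_zero _ hfd)

lemma polyIter_succ' (f : Polynomial K) (n : ℕ) :
    polyIter f (n + 1) = (polyIter f n).comp f := by
  induction n with
  | zero => simp [polyIter]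
  | succ n ih =>
    show f.comp (polyIter f (n + 1)) = (f.comp (polyIter f n)).comp f
    rw [comp_assoc, ← ih]

lemma polyIter_eval (f : Polynomial K) (n : ℕ) (x : K) :
    Polynomial.eval x (polyIter f n) = (fun y => Polynomial.eval y f)^[n] x := by
  induction n with
  | zero => simp [polyIter]
  | succ n ih =>
    rw [polyIter, eval_comp, ih, Function.iterate_succ_apply']

variable [IsAlgClosed K]

lemma roots_comp_map_aux (f : Polynomial K) (hf : f.Monic) (hfd : f.natDegree ≠ 0) :
    ∀ N (p : Polynomial K), p.natDegree ≤ N →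
      (p.comp f).roots.map (fun α => Polynomial.eval α f) = f.natDegree • p.roots := by
  intro N
  induction N with
  | zero =>
    intro p hp
    rw [Polynomial.eq_C_of_natDegree_le_zero hp]
    simp
  | succ N ih =>
    intro p hp
    by_cases h0 : p.natDegree = 0
    · rw [Polynomial.eq_C_of_natDegree_le_zero h0.le]
      simp
    · have hpne : p ≠ 0 := fun h => h0 (by simp [h])
      obtain ⟨a, ha⟩ := IsAlgClosed.exists_root p (by
        rw [degree_eq_natDegree hpne]
        exact_mod_cast h0)
      set q := p / (X - C a) with hq
      have hfac : (X - C a) * q = p := mul_div_eq_iff_isRoot.mpr ha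
      have hq0 : q ≠ 0 := by
        intro h
        rw [h, mul_zero] at hfac
        exact hpne hfac.symm
      have hqdeg : q.natDegree ≤ N := by
        have := natDegree_mul (X_sub_C_ne_zero a) hq0
        rw [hfac, natDegree_X_sub_C] at this
        omega
      have hfC : f - C a ≠ 0 := by
        have : (f - C a).Monic := hf.sub_of_left (lt_of_le_of_lt degree_C_le
          (natDegree_pos_iff_degree_pos.mp (Nat.pos_of_ne_zero hfd)))
        exact this.ne_zero
      have hqc : q.comp f ≠ 0 := by
        intro h
        rcases comp_eq_zero_iff.mp h with h' | ⟨_, h'⟩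
        · exact hq0 h'
        · exact hfd (by rw [h', natDegree_C])
      have hcomp : p.comp f = (f - C a) * q.comp f := by
        rw [← hfac, mul_comp, sub_comp, X_comp, C_comp]
      have hmapfa : (f - C a).roots.map (fun α => Polynomial.eval α f) =
          Multiset.replicate f.natDegree a := by
        refine Multiset.eq_replicate.mpr ⟨?_, ?_⟩
        · rw [Multiset.card_map]
          rw [← natDegree_sub_C (a := a)]
          exact (splits_iff_card_roots.mp (IsAlgClosed.splits _))
        · intro b hb
          obtain ⟨α, hα, rfl⟩ := Multiset.mem_map.mp hb
          have := (mem_roots hfC).mp hα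
          simpa [sub_eq_zero] using this
      rw [hcomp, roots_mul (mul_ne_zero hfC hqc), Multiset.map_add, hmapfa, ih q hqdeg,
        ← hfac, roots_mul (mul_ne_zero (X_sub_C_ne_zero a) hq0), roots_X_sub_C,
        smul_add, Multiset.nsmul_singleton]

lemma roots_comp_map (f p : Polynomial K) (hf : f.Monic) (hfd : f.natDegree ≠ 0) :
    (p.comp f).roots.map (fun α => Polynomial.eval α f) = f.natDegree • p.roots :=
  roots_comp_map_aux f hf hfd p.natDegree p le_rfl

lemma multiset_prod_map_finset_prod {ι α : Type*} [CommMonoid α] (s : Multiset β)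
    (u : Finset ι) (t : ι → β → α) :
    (s.map (fun b => ∏ i ∈ u, t i b)).prod = ∏ i ∈ u, (s.map (t i)).prod := by
  classical
  induction u using Finset.induction_on with
  | empty => simp
  | insert _ _ hni ih =>
    rename_i j u'
    simp only [Finset.prod_insert hni, ← ih, ← Multiset.prod_map_mul]

end Aux

theorem discProd_comp_iter {K : Type*} [Field K] [IsAlgClosed K] [CharZero K]
    (f g : Polynomial K) (hf : f.Monic) (hg : g.Monic)
    (d : ℕ) (hd : f.natDegree = d) (hd2 : 2 ≤ d) (hgdeg : 1 ≤ g.natDegree)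
    (γ : Fin (d - 1) → K)
    (hcrit : derivative f = C (d : K) * ∏ i, (X - C (γ i)))
    (n : ℕ) (hn : 1 ≤ n) :
    discProd (g.comp (polyIter f n)) =
      discProd (g.comp (polyIter f (n - 1))) ^ d *
        ((-1 : K) ^ (d - 1) * (d : K)) ^ (d ^ n * g.natDegree) *
        ∏ i, Polynomial.eval ((fun x => Polynomial.eval x f)^[n] (γ i)) g := by
  obtain ⟨m, rfl⟩ : ∃ m, n = m + 1 := ⟨n - 1, by omega⟩
  have hmn : m + 1 - 1 = m := by omega
  have hfd : f.natDegree ≠ 0 := by omega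
  set Q := g.comp (polyIter f m) with hQdef
  have hQm : Q.Monic := hg.comp (polyIter_monic f hf hfd m)
    (by rw [polyIter_natDegree]; positivity)
  have hPQ : g.comp (polyIter f (m + 1)) = Q.comp f := by
    rw [polyIter_succ', ← comp_assoc]
  set P := g.comp (polyIter f (m + 1)) with hPdef
  have hPm : P.Monic := hPQ ▸ hQm.comp hf hfd
  have hQdeg : Q.natDegree = g.natDegree * d ^ m := by
    rw [hQdef, natDegree_comp, polyIter_natDegree, hd]
  have hPdeg : P.natDegree = d ^ (m + 1) * g.natDegree := by
    rw [hPQ, natDegree_comp, hQdeg, hd, pow_succ]; ring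
  set N := d ^ (m + 1) * g.natDegree with hN
  have hcard : Multiset.card P.roots = N := by
    rw [← hPdeg]
    exact splits_iff_card_roots.mp (IsAlgClosed.splits _)
  -- derivative decomposition
  have hder : ∀ α : K, Polynomial.eval α (derivative P) =
      Polynomial.eval α (derivative f) *
        Polynomial.eval (Polynomial.eval α f) (derivative Q) := by
    intro α
    rw [hPQ, derivative_comp, eval_mul, eval_comp]
  rw [hmn]
  rw [show discProd P = (P.roots.map (fun α => Polynomial.eval α (derivative P))).prod from rfl]
  have hsplit : (P.roots.map (fun α => Polynomial.eval α (derivative P))).prod =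
      (P.roots.map (fun α => Polynomial.eval α (derivative f))).prod *
      (P.roots.map (fun α => Polynomial.eval (Polynomial.eval α f) (derivative Q))).prod := by
    rw [← Multiset.prod_map_mul]
    congr 1
    exact Multiset.map_congr rfl (fun α _ => hder α)
  rw [hsplit]
  -- second factor is discProd Q ^ d
  have hB : (P.roots.map (fun α => Polynomial.eval (Polynomial.eval α f) (derivative Q))).prod
      = discProd Q ^ d := by
    have : P.roots.map (fun α => Polynomial.eval (Polynomial.eval α f) (derivative Q)) =
        (P.roots.map (fun α => Polynomial.eval α f)).map
          (fun β => Polynomial.eval β (derivative Q)) := by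
      rw [Multiset.map_map]; rfl
    rw [this, hPQ, roots_comp_map f Q hf hfd, hd, Multiset.map_nsmul,
      Multiset.prod_nsmul]
    rfl
  rw [hB]
  -- first factor
  have hA : (P.roots.map (fun α => Polynomial.eval α (derivative f))).prod =
      ((-1 : K) ^ (d - 1) * (d : K)) ^ N *
        ∏ i, Polynomial.eval ((fun x => Polynomial.eval x f)^[m + 1] (γ i)) g := by
    have heval : ∀ α : K, Polynomial.eval α (derivative f) =
        (d : K) * ∏ i, (α - γ i) := by
      intro α
      rw [hcrit, eval_mul, eval_C, eval_prod]
      simp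
    have h1 : P.roots.map (fun α => Polynomial.eval α (derivative f)) =
        P.roots.map (fun α => (d : K) * ∏ i, (α - γ i)) :=
      Multiset.map_congr rfl (fun α _ => heval α)
    rw [h1, Multiset.prod_map_mul]
    have hconst : (P.roots.map (fun _ => (d : K))).prod = (d : K) ^ N := by
      rw [Multiset.map_const', Multiset.prod_replicate, hcard]
    have hswap : (P.roots.map (fun α => ∏ i, (α - γ i))).prod =
        ∏ i, (P.roots.map (fun α => α - γ i)).prod :=
      multiset_prod_map_finset_prod P.roots Finset.univ (fun i α => α - γ i)
    have hone : ∀ i : Fin (d - 1), (P.roots.map (fun α => α - γ i)).prod =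
        (-1 : K) ^ N * Polynomial.eval ((fun x => Polynomial.eval x f)^[m + 1] (γ i)) g := by
      intro i
      have h2 : P.roots.map (fun α => α - γ i) =
          P.roots.map (fun α => (-1 : K) * (γ i - α)) :=
        Multiset.map_congr rfl (fun α _ => by ring)
      rw [h2, Multiset.prod_map_mul, Multiset.map_const', Multiset.prod_replicate, hcard]
      congr 1
      rw [← Splits.eval_eq_prod_roots_of_monic
        (IsAlgClosed.splits _) hPm, hPdef, eval_comp, polyIter_eval]
    rw [hconst, hswap, Finset.prod_congr rfl (fun i _ => hone i), Finset.prod_mul_distrib,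
      Finset.prod_const, Finset.card_univ, Fintype.card_fin, mul_pow, ← pow_mul, ← pow_mul,
      mul_comm N (d - 1)]
    ring
  rw [hA]
  ring
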